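/- If R ~ Rayleigh(1) and V has density 1/(π√(1−v²)) on (−1,1) (the law of sin of a uniform angle), independent of R, then R·V is standard normal. -/

import Mathlib

open MeasureTheory ProbabilityTheory Real

/-- The Rayleigh distribution with scale 1, with density `r · exp(-r²/2)` on `(0, ∞)`. -/
noncomputable def rayleighMeasure : Measure ℝ :=
  volume.withDensity fun r =>
    ENNReal.ofReal (if 0 < r then r * Real.exp (-r ^ 2 / 2) else 0)

/-- The arcsine-type distribution with density `1 / (π √(1 - v²))` on `(-1, 1)`. -/
noncomputable def arcsineMeasure : Measure ℝ :=
  volume.withDensity fun v =>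
    ENNReal.ofReal (if v ∈ Set.Ioo (-1 : ℝ) 1 then 1 / (π * Real.sqrt (1 - v ^ 2)) else 0)

open Set

noncomputable def unifAngle : Measure ℝ :=
  volume.withDensity fun θ => ENNReal.ofReal (if θ ∈ Set.Ioo (-π) π then (2 * π)⁻¹ else 0)

instance : SFinite unifAngle := by unfold unifAngle; infer_instance
instance : SFinite rayleighMeasure := by unfold rayleighMeasure; infer_instance
instance : SFinite arcsineMeasure := by unfold arcsineMeasure; infer_instance

theorem my_lintegral_cov {s : Set ℝ} {f f' : ℝ → ℝ} (hs : MeasurableSet s)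
    (hf' : ∀ x ∈ s, HasDerivWithinAt f (f' x) s x) (hf : Set.InjOn f s) (g : ℝ → ENNReal) :
    ∫⁻ x in f '' s, g x = ∫⁻ x in s, ENNReal.ofReal |f' x| * g (f x) := by
  simpa only [ContinuousLinearMap.det_toSpanSingleton] using
    lintegral_image_eq_lintegral_abs_det_fderiv_mul volume hs
      (fun x hx => (hf' x hx).hasFDerivWithinAt) hf g

theorem sin_image_Ioo : Real.sin '' Ioo (-(π/2)) (π/2) = Ioo (-1 : ℝ) 1 := by
  ext v
  constructor
  · rintro ⟨θ, hθ, rfl⟩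
    constructor
    · have h := strictMonoOn_sin (a := -(π/2)) (b := θ)
        ⟨le_refl _, by linarith [hθ.1, hθ.2, pi_pos]⟩ ⟨hθ.1.le, hθ.2.le⟩ hθ.1
      simpa using h
    · have h := strictMonoOn_sin (a := θ) (b := π/2) ⟨hθ.1.le, hθ.2.le⟩
        ⟨by linarith [hθ.1, hθ.2, pi_pos], le_refl _⟩ hθ.2
      simpa using h
  · intro hv
    exact ⟨arcsin v, ⟨neg_pi_div_two_lt_arcsin.2 hv.1, arcsin_lt_pi_div_two.2 hv.2⟩,
      sin_arcsin hv.1.le hv.2.le⟩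

theorem reflect_right (g : ℝ → ENNReal) :
    ∫⁻ θ in Ioo (π/2) π, g (Real.sin θ) = ∫⁻ θ in Ioo 0 (π/2), g (Real.sin θ) := by
  have himg : (fun x : ℝ => π - x) '' Ioo 0 (π/2) = Ioo (π/2) π := by
    rw [Set.image_const_sub_Ioo, show π - π/2 = π/2 by ring, sub_zero]
  rw [← himg, my_lintegral_cov (f := fun x => π - x) (f' := fun _ => (-1 : ℝ)) measurableSet_Ioo
    (fun x _ => ((hasDerivAt_id x).const_sub π).hasDerivWithinAt)
    (fun a _ b _ h => by dsimp at h; linarith) (fun v => g (Real.sin v))]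
  simp [Real.sin_pi_sub]

theorem reflect_left (g : ℝ → ENNReal) :
    ∫⁻ θ in Ioo (-π) (-(π/2)), g (Real.sin θ) = ∫⁻ θ in Ioo (-(π/2)) 0, g (Real.sin θ) := by
  have himg : (fun x : ℝ => -π - x) '' Ioo (-(π/2)) 0 = Ioo (-π) (-(π/2)) := by
    rw [Set.image_const_sub_Ioo, sub_zero, show -π - -(π/2) = -(π/2) by ring]
  rw [← himg, my_lintegral_cov (f := fun x => -π - x) (f' := fun _ => (-1 : ℝ)) measurableSet_Ioo
    (fun x _ => ((hasDerivAt_id x).const_sub (-π)).hasDerivWithinAt)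
    (fun a _ b _ h => by dsimp at h; linarith) (fun v => g (Real.sin v))]
  have hsin : ∀ x : ℝ, Real.sin (-π - x) = Real.sin x := by
    intro x
    rw [show -π - x = -(π + x) by ring, Real.sin_neg, Real.sin_add]
    simp
  simp [hsin]

theorem sin_fold (g : ℝ → ENNReal) :
    ∫⁻ θ in Ioo (-π) π, g (Real.sin θ)
      = (∫⁻ θ in Ioo (-(π/2)) (π/2), g (Real.sin θ))
        + ∫⁻ θ in Ioo (-(π/2)) (π/2), g (Real.sin θ) := by
  have hu1 : Ioo (-π) (-(π/2)) ∪ Ico (-(π/2)) π = Ioo (-π) π :=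
    Set.Ioo_union_Ico_eq_Ioo (by linarith [pi_pos]) (by linarith [pi_pos])
  have hu2 : Ico (-(π/2)) (π/2) ∪ Ico (π/2) π = Ico (-(π/2)) π :=
    Set.Ico_union_Ico_eq_Ico (by linarith [pi_pos]) (by linarith [pi_pos])
  have hu3 : Ioo (-(π/2)) 0 ∪ Ico 0 (π/2) = Ioo (-(π/2)) (π/2) :=
    Set.Ioo_union_Ico_eq_Ioo (by linarith [pi_pos]) (by linarith [pi_pos])
  rw [← hu1, lintegral_union measurableSet_Ico (by
    rw [Set.disjoint_left]; rintro x ⟨_, h2⟩ ⟨h3, _⟩; linarith), ← hu2,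
    lintegral_union measurableSet_Ico (by
    rw [Set.disjoint_left]; rintro x ⟨_, h2⟩ ⟨h3, _⟩; linarith)]
  have e1 : ∫⁻ θ in Ico (-(π/2)) (π/2), g (Real.sin θ)
      = ∫⁻ θ in Ioo (-(π/2)) (π/2), g (Real.sin θ) :=
    (setLIntegral_congr (MeasureTheory.Ioo_ae_eq_Ico)).symm
  have e2 : ∫⁻ θ in Ico (π/2) π, g (Real.sin θ)
      = ∫⁻ θ in Ioo (π/2) π, g (Real.sin θ) :=
    (setLIntegral_congr (MeasureTheory.Ioo_ae_eq_Ico)).symm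
  rw [e1, e2, reflect_left, reflect_right]
  have e3 : ∫⁻ θ in Ico 0 (π/2), g (Real.sin θ)
      = ∫⁻ θ in Ioo 0 (π/2), g (Real.sin θ) :=
    (setLIntegral_congr (MeasureTheory.Ioo_ae_eq_Ico)).symm
  have hadd2 : (∫⁻ θ in Ioo (-(π/2)) 0, g (Real.sin θ))
      + ∫⁻ θ in Ioo 0 (π/2), g (Real.sin θ)
      = ∫⁻ θ in Ioo (-(π/2)) (π/2), g (Real.sin θ) := by
    rw [← e3, ← lintegral_union measurableSet_Ico (by
      rw [Set.disjoint_left]; rintro x ⟨_, h2⟩ ⟨h3, _⟩; linarith), hu3]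
  calc (∫⁻ θ in Ioo (-(π/2)) 0, g (Real.sin θ))
        + ((∫⁻ θ in Ioo (-(π/2)) (π/2), g (Real.sin θ))
          + ∫⁻ θ in Ioo 0 (π/2), g (Real.sin θ))
      = ((∫⁻ θ in Ioo (-(π/2)) 0, g (Real.sin θ))
          + ∫⁻ θ in Ioo 0 (π/2), g (Real.sin θ))
        + ∫⁻ θ in Ioo (-(π/2)) (π/2), g (Real.sin θ) := by ring
    _ = _ := by rw [hadd2]

theorem arcsine_cov (g : ℝ → ENNReal) :
    ∫⁻ v in Ioo (-1 : ℝ) 1, ENNReal.ofReal (1 / (π * Real.sqrt (1 - v ^ 2))) * g v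
      = ∫⁻ θ in Ioo (-(π/2)) (π/2), ENNReal.ofReal (1/π) * g (Real.sin θ) := by
  rw [← sin_image_Ioo, my_lintegral_cov (f' := Real.cos) measurableSet_Ioo
    (fun x _ => (Real.hasDerivAt_sin x).hasDerivWithinAt)
    (Real.injOn_sin.mono (Set.Ioo_subset_Icc_self))
    (fun v => ENNReal.ofReal (1 / (π * Real.sqrt (1 - v ^ 2))) * g v)]
  refine setLIntegral_congr_fun measurableSet_Ioo (fun θ hθ => ?_)
  have hcos : 0 < Real.cos θ := Real.cos_pos_of_mem_Ioo hθ
  have h1 : Real.sqrt (1 - Real.sin θ ^ 2) = Real.cos θ := by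
    rw [← Real.cos_sq', Real.sqrt_sq hcos.le]
  rw [h1, abs_of_pos hcos, ← mul_assoc, ← ENNReal.ofReal_mul hcos.le]
  congr 2
  field_simp

theorem arcsine_eq_map_sin : Measure.map Real.sin unifAngle = arcsineMeasure := by
  have hsin : Measurable Real.sin := Real.continuous_sin.measurable
  ext s hs
  have hindm : Measurable (s.indicator (fun _ => (1 : ENNReal))) :=
    measurable_const.indicator hs
  rw [Measure.map_apply hsin hs, unifAngle, withDensity_apply _ (hsin hs),
    arcsineMeasure, withDensity_apply _ hs]
  have hL : ∫⁻ θ in Real.sin ⁻¹' s,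
        ENNReal.ofReal (if θ ∈ Set.Ioo (-π) π then (2 * π)⁻¹ else 0)
      = ∫⁻ θ in Ioo (-π) π,
        ENNReal.ofReal (2 * π)⁻¹ * s.indicator (fun _ => 1) (Real.sin θ) := by
    rw [← lintegral_indicator (hsin hs), ← lintegral_indicator measurableSet_Ioo]
    congr 1
    funext θ
    by_cases h1 : θ ∈ Ioo (-π) π <;> by_cases h2 : Real.sin θ ∈ s <;>
      simp [Set.indicator, h1, h2, Set.mem_preimage]
  have hR : ∫⁻ v in s,
        ENNReal.ofReal (if v ∈ Set.Ioo (-1 : ℝ) 1 then 1 / (π * Real.sqrt (1 - v ^ 2)) else 0)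
      = ∫⁻ v in Ioo (-1 : ℝ) 1,
        ENNReal.ofReal (1 / (π * Real.sqrt (1 - v ^ 2))) * s.indicator (fun _ => 1) v := by
    rw [← lintegral_indicator hs, ← lintegral_indicator measurableSet_Ioo]
    congr 1
    funext v
    by_cases h1 : v ∈ Ioo (-1 : ℝ) 1 <;> by_cases h2 : v ∈ s <;>
      simp [Set.indicator, h1, h2]
  rw [hL, hR, arcsine_cov (s.indicator (fun _ => 1)),
    sin_fold (fun v => ENNReal.ofReal (2 * π)⁻¹ * s.indicator (fun _ => 1) v)]
  have hofr : ENNReal.ofReal (1/π)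
      = ENNReal.ofReal (2 * π)⁻¹ + ENNReal.ofReal (2 * π)⁻¹ := by
    rw [← ENNReal.ofReal_add (by positivity) (by positivity)]
    congr 1
    field_simp
    ring
  have : ∀ θ : ℝ, ENNReal.ofReal (1/π) * s.indicator (fun _ => 1) (Real.sin θ)
      = ENNReal.ofReal (2 * π)⁻¹ * s.indicator (fun _ => 1) (Real.sin θ)
        + ENNReal.ofReal (2 * π)⁻¹ * s.indicator (fun _ => 1) (Real.sin θ) := by
    intro θ; rw [hofr, add_mul]
  simp only [this]
  have hm' : Measurable fun θ : ℝ =>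
      ENNReal.ofReal (2 * π)⁻¹ * s.indicator (fun _ => 1) (Real.sin θ) :=
    (hindm.comp hsin).const_mul _
  exact (lintegral_add_left hm' _).symm

theorem my_lintegral_polar (g : ℝ × ℝ → ENNReal) :
    ∫⁻ p, g p = ∫⁻ p in polarCoord.target, ENNReal.ofReal p.1 * g (polarCoord.symm p) := by
  set B : ℝ × ℝ → ℝ × ℝ →L[ℝ] ℝ × ℝ := fun p =>
    LinearMap.toContinuousLinearMap (Matrix.toLin (Module.Basis.finTwoProd ℝ) (Module.Basis.finTwoProd ℝ)
      !![Real.cos p.2, -p.1 * Real.sin p.2; Real.sin p.2, p.1 * Real.cos p.2])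
  have B_det : ∀ p, (B p).det = p.1 := by
    intro p
    conv_rhs => rw [← one_mul p.1, ← Real.cos_sq_add_sin_sq p.2]
    simp only [B, neg_mul, LinearMap.det_toContinuousLinearMap, LinearMap.det_toLin,
      Matrix.det_fin_two_of, sub_neg_eq_add]
    ring
  calc
    ∫⁻ p, g p = ∫⁻ p in polarCoord.source, g p := by
      rw [← setLIntegral_univ]
      exact (setLIntegral_congr polarCoord_source_ae_eq_univ).symm
    _ = ∫⁻ p in polarCoord.target, ENNReal.ofReal |(B p).det| * g (polarCoord.symm p) := by
      rw [← polarCoord.symm_image_target_eq_source]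
      simp only [B_det, ← det_fderivPolarCoordSymm]
      exact lintegral_image_eq_lintegral_abs_det_fderiv_mul volume
        polarCoord.open_target.measurableSet
        (fun p _ => (hasFDerivAt_polarCoord_symm p).hasFDerivWithinAt)
        polarCoord.symm.injOn g
    _ = ∫⁻ p in polarCoord.target, ENNReal.ofReal p.1 * g (polarCoord.symm p) := by
      refine setLIntegral_congr_fun polarCoord.open_target.measurableSet
        (fun p hp => ?_)
      rw [B_det, abs_of_pos hp.1]


instance : SFinite unifAngle := by unfold unifAngle; infer_instance
instance : SFinite rayleighMeasure := by unfold rayleighMeasure; infer_instance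

theorem map_mul_sin (s : Set ℝ) (hs : MeasurableSet s) :
    Measure.map (fun p : ℝ × ℝ => p.1 * Real.sin p.2) (rayleighMeasure.prod unifAngle) s
      = gaussianReal 0 1 s := by
  have hsin : Measurable Real.sin := Real.continuous_sin.measurable
  have hm : Measurable (fun p : ℝ × ℝ => p.1 * Real.sin p.2) :=
    measurable_fst.mul (hsin.comp measurable_snd)
  set ind : ℝ → ENNReal := s.indicator 1 with hind_def
  have hindm : Measurable ind := measurable_const.indicator hs
  have hfR : Measurable (fun r : ℝ =>
      ENNReal.ofReal (if 0 < r then r * Real.exp (-r ^ 2 / 2) else 0)) := by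
    apply Measurable.ennreal_ofReal
    exact Measurable.ite measurableSet_Ioi (by fun_prop) measurable_const
  have hfU : Measurable (fun θ : ℝ =>
      ENNReal.ofReal (if θ ∈ Set.Ioo (-π) π then (2 * π)⁻¹ else 0)) := by
    apply Measurable.ennreal_ofReal
    exact Measurable.ite measurableSet_Ioo measurable_const measurable_const
  rw [Measure.map_apply hm hs]
  set fR : ℝ → ENNReal := fun r => ENNReal.ofReal (if 0 < r then r * Real.exp (-r ^ 2 / 2) else 0)
    with hfR_def
  set fU : ℝ → ENNReal := fun θ => ENNReal.ofReal (if θ ∈ Set.Ioo (-π) π then (2 * π)⁻¹ else 0)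
    with hfU_def
  -- step 1 : to a double lintegral over volume on ℝ²
  have step1 : (rayleighMeasure.prod unifAngle) ((fun p : ℝ × ℝ => p.1 * Real.sin p.2) ⁻¹' s)
      = ∫⁻ p : ℝ × ℝ, fR p.1 * (fU p.2 * ind (p.1 * Real.sin p.2)) := by
    rw [← lintegral_indicator_one (hm hs)]
    have e : ((fun p : ℝ × ℝ => p.1 * Real.sin p.2) ⁻¹' s).indicator (1 : (ℝ × ℝ) → ENNReal)
        = fun p : ℝ × ℝ => ind (p.1 * Real.sin p.2) := by
      funext p
      by_cases h : p.1 * Real.sin p.2 ∈ s <;> simp [Set.indicator, h, ind]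
    have hcomp : Measurable fun p : ℝ × ℝ => ind (p.1 * Real.sin p.2) := hindm.comp hm
    rw [e, lintegral_prod _ hcomp.aemeasurable]
    have einner : ∀ r : ℝ, ∫⁻ θ, ind (r * Real.sin θ) ∂unifAngle
        = ∫⁻ θ, fU θ * ind (r * Real.sin θ) := by
      intro r
      have hc : Measurable fun θ : ℝ => ind (r * Real.sin θ) :=
        hindm.comp (measurable_const.mul hsin)
      rw [unifAngle, lintegral_withDensity_eq_lintegral_mul volume hfU hc]
      rfl
    simp only [einner]
    have hin2 : Measurable fun p : ℝ × ℝ => fU p.2 * ind (p.1 * Real.sin p.2) :=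
      (hfU.comp measurable_snd).mul (hindm.comp hm)
    have hout : Measurable fun r : ℝ => ∫⁻ θ, fU θ * ind (r * Real.sin θ) :=
      Measurable.lintegral_prod_right' hin2
    rw [rayleighMeasure, lintegral_withDensity_eq_lintegral_mul volume hfR hout]
    have epush : ∀ r : ℝ, fR r * ∫⁻ θ, fU θ * ind (r * Real.sin θ)
        = ∫⁻ θ, fR r * (fU θ * ind (r * Real.sin θ)) := by
      intro r
      exact (lintegral_const_mul _ ((hfU.mul
        (hindm.comp (measurable_const.mul hsin)) : Measurable fun θ : ℝ =>
          fU θ * ind (r * Real.sin θ)))).symm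
    simp only [Pi.mul_apply, epush]
    have hfull : Measurable fun p : ℝ × ℝ => fR p.1 * (fU p.2 * ind (p.1 * Real.sin p.2)) :=
      (hfR.comp measurable_fst).mul hin2
    rw [← lintegral_prod _ hfull.aemeasurable, ← Measure.volume_eq_prod]
  rw [step1]
  set c : ℝ := (Real.sqrt (2 * π))⁻¹ with hc_def
  have hcpos : 0 < c := by
    rw [hc_def]; positivity
  set g : ℝ × ℝ → ENNReal := fun q =>
    ENNReal.ofReal (c * Real.exp (-q.1 ^ 2 / 2))
      * (ENNReal.ofReal (c * Real.exp (-q.2 ^ 2 / 2)) * ind q.2) with hg_def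
  have step2 : ∫⁻ p : ℝ × ℝ, fR p.1 * (fU p.2 * ind (p.1 * Real.sin p.2))
      = ∫⁻ q : ℝ × ℝ, g q := by
    rw [my_lintegral_polar g]
    have e0 : (fun p : ℝ × ℝ => fR p.1 * (fU p.2 * ind (p.1 * Real.sin p.2)))
        = polarCoord.target.indicator
            (fun p => fR p.1 * (fU p.2 * ind (p.1 * Real.sin p.2))) := by
      funext p
      rw [Set.indicator]
      split_ifs with h
      · rfl
      · rw [polarCoord_target, Set.mem_prod, not_and_or] at h
        rcases h with h | h
        · have : ¬ (0 < p.1) := h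
          simp [fR, this]
        · have h2 : ¬(-π < p.2 ∧ p.2 < π) := by simpa [Set.mem_Ioo] using h
          simp [fU, h2]
    rw [e0, lintegral_indicator polarCoord.open_target.measurableSet]
    refine setLIntegral_congr_fun polarCoord.open_target.measurableSet
      (fun p hp => ?_)
    rw [polarCoord_target] at hp
    have hp1 : 0 < p.1 := hp.1
    have hp2 : p.2 ∈ Set.Ioo (-π) π := hp.2
    rw [polarCoord_symm_apply]
    simp only [fR, fU, if_pos hp1, if_pos hp2, g]
    have hexp : ∀ x : ℝ, (0:ℝ) ≤ Real.exp x := fun x => (Real.exp_pos x).le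
    rw [← mul_assoc (ENNReal.ofReal p.1), ← mul_assoc, ← ENNReal.ofReal_mul hp1.le,
      ← ENNReal.ofReal_mul (by positivity)]
    have hsq : Real.sqrt (2 * π) * Real.sqrt (2 * π) = 2 * π :=
      Real.mul_self_sqrt (by positivity)
    have hsum : -(p.1 * Real.cos p.2) ^ 2 / 2 + -(p.1 * Real.sin p.2) ^ 2 / 2
        = -p.1 ^ 2 / 2 := by
      have h := Real.cos_sq_add_sin_sq p.2
      nlinarith [h]
    have key : p.1 * Real.exp (-p.1 ^ 2 / 2) * (2 * π)⁻¹
        = (p.1 * (c * Real.exp (-(p.1 * Real.cos p.2) ^ 2 / 2)))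
          * (c * Real.exp (-(p.1 * Real.sin p.2) ^ 2 / 2)) := by
      calc p.1 * Real.exp (-p.1 ^ 2 / 2) * (2 * π)⁻¹
          = p.1 * (c * c) * Real.exp (-p.1 ^ 2 / 2) := by
            rw [hc_def, ← mul_inv, hsq]; ring
        _ = p.1 * (c * c) * Real.exp (-(p.1 * Real.cos p.2) ^ 2 / 2
              + -(p.1 * Real.sin p.2) ^ 2 / 2) := by rw [hsum]
        _ = _ := by rw [Real.exp_add]; ring
    rw [key, ENNReal.ofReal_mul (by positivity), mul_assoc]
  rw [step2]
  -- step 3 : compute the Gaussian double integral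
  have hpdf : (fun y : ℝ => ENNReal.ofReal (c * Real.exp (-y ^ 2 / 2)))
      = fun y => ENNReal.ofReal (gaussianPDFReal 0 1 y) := by
    funext y
    congr 1
    rw [gaussianPDFReal]
    push_cast
    norm_num
    rw [hc_def, Real.sqrt_mul (by norm_num : (0:ℝ) ≤ 2) π, mul_inv, mul_comm]
  have hg1m : Measurable fun y : ℝ => ENNReal.ofReal (c * Real.exp (-y ^ 2 / 2)) := by
    rw [hpdf]
    exact (measurable_gaussianPDFReal 0 1).ennreal_ofReal
  have hCeq : ∫⁻ y : ℝ, ENNReal.ofReal (c * Real.exp (-y ^ 2 / 2)) * ind y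
      = gaussianReal 0 1 s := by
    rw [gaussianReal_apply 0 one_ne_zero s, ← lintegral_indicator hs]
    congr 1
    funext y
    by_cases h : y ∈ s <;>
      simp [Set.indicator, h, ind, gaussianPDF_def, hpdf, congrFun hpdf y]
  have hgm : Measurable g := by
    apply Measurable.mul (hg1m.comp measurable_fst)
    exact ((hg1m.comp measurable_snd).mul (hindm.comp measurable_snd))
  rw [Measure.volume_eq_prod, lintegral_prod _ hgm.aemeasurable]
  have einner2 : ∀ x : ℝ, ∫⁻ y, g (x, y)
      = ENNReal.ofReal (c * Real.exp (-x ^ 2 / 2)) * gaussianReal 0 1 s := by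
    intro x
    rw [hg_def]
    simp only
    rw [lintegral_const_mul _ ((by exact hg1m.mul hindm : Measurable fun y : ℝ =>
      ENNReal.ofReal (c * Real.exp (-y ^ 2 / 2)) * ind y)), hCeq]
  simp only [einner2]
  rw [lintegral_mul_const _ hg1m, hpdf, lintegral_gaussianPDFReal_eq_one 0 one_ne_zero, one_mul]

theorem stmt17 {Ω : Type*} [MeasurableSpace Ω] (P : Measure Ω) [IsProbabilityMeasure P]
    (R V : Ω → ℝ) (hR : Measurable R) (hV : Measurable V)
    (hind : IndepFun R V P)
    (hRlaw : Measure.map R P = rayleighMeasure)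
    (hVlaw : Measure.map V P = arcsineMeasure) :
    Measure.map (fun ω => R ω * V ω) P = gaussianReal 0 1 := by
  have hsin : Measurable Real.sin := Real.continuous_sin.measurable
  have hpair : Measure.map (fun ω => (R ω, V ω)) P = rayleighMeasure.prod arcsineMeasure := by
    rw [← hRlaw, ← hVlaw]
    exact (indepFun_iff_map_prod_eq_prod_map_map hR.aemeasurable hV.aemeasurable).mp hind
  have h1 : Measure.map (fun ω => R ω * V ω) P
      = Measure.map (fun p : ℝ × ℝ => p.1 * p.2) (rayleighMeasure.prod arcsineMeasure) := by
    rw [← hpair, Measure.map_map (by exact measurable_fst.mul measurable_snd : Measurable fun p : ℝ × ℝ => p.1 * p.2) (hR.prodMk hV)]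
    rfl
  have h3 : rayleighMeasure.prod arcsineMeasure
      = Measure.map (Prod.map (id : ℝ → ℝ) Real.sin) (rayleighMeasure.prod unifAngle) := by
    conv_lhs => rw [← arcsine_eq_map_sin, ← Measure.map_id (μ := rayleighMeasure)]
    exact Measure.map_prod_map _ _ measurable_id hsin
  have hK2 : Measure.map (fun p : ℝ × ℝ => p.1 * Real.sin p.2) (rayleighMeasure.prod unifAngle)
      = gaussianReal 0 1 := Measure.ext map_mul_sin
  rw [h1, h3, Measure.map_map (by exact measurable_fst.mul measurable_snd : Measurable fun p : ℝ × ℝ => p.1 * p.2)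
    (measurable_id.prodMap hsin), ← hK2]
  rfl
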